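/- Let u_T : ℝⁿ → ℝ be Lipschitz. If there exists a Lipschitz function u0 : ℝⁿ → ℝ with S_T^+ u0 = u_T, then for every T' with 0 < T' ≤ T there exists a Lipschitz function u0' : ℝⁿ → ℝ with S_{T'}^+ u0' = u_T; that is, the set of reachable targets becomes smaller as the time horizon increases. -/

import Mathlib

open scoped RealInnerProductSpace
open Filter

noncomputable section

/-- `n`-dimensional Euclidean space. -/
abbrev Euc (n : ℕ) := EuclideanSpace ℝ (Fin n)

/-- A real-valued function on `ℝⁿ` is Lipschitz (with some constant). -/
def IsLip {n : ℕ} (f : Euc n → ℝ) : Prop := ∃ K : NNReal, LipschitzWith K f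

/-- The quadratic form `q ↦ ⟨M q, q⟩` associated to a matrix `M`. -/
def quadA {n : ℕ} (M : Matrix (Fin n) (Fin n) ℝ) (q : Euc n) : ℝ :=
  ⟪(Matrix.toEuclideanLin M) q, q⟫

/-- The forward Hopf–Lax operator for the quadratic Hamiltonian `H(p) = ⟨A p, p⟩/2`:
`(S_T^+ g)(x) = inf_y [g(y) + ⟨A⁻¹(x-y), x-y⟩/(2T)]`. -/
def SplusQ {n : ℕ} (T : ℝ) (A : Matrix (Fin n) (Fin n) ℝ) (g : Euc n → ℝ) (x : Euc n) : ℝ :=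
  ⨅ y : Euc n, (g y + quadA A⁻¹ (x - y) / (2 * T))

/-- The backward operator for the quadratic Hamiltonian:
`(S_T^- g)(x) = sup_y [g(y) - ⟨A⁻¹(y-x), y-x⟩/(2T)]`. -/
def SminusQ {n : ℕ} (T : ℝ) (A : Matrix (Fin n) (Fin n) ℝ) (g : Euc n → ℝ) (x : Euc n) : ℝ :=
  ⨆ y : Euc n, (g y - quadA A⁻¹ (y - x) / (2 * T))

/-- Pushing a constant out of a real infimum (bounded-below version). -/
private lemma real_iInf_add {X : Type*} [Nonempty X] (f : X → ℝ) (a m : ℝ)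
    (hm : ∀ x, m ≤ f x) : (⨅ x, f x) + a = ⨅ x, f x + a := by
  have hb : BddBelow (Set.range f) := ⟨m, by rintro _ ⟨x, rfl⟩; exact hm x⟩
  exact Monotone.map_ciInf_of_continuousAt ((continuous_add_right a).continuousAt)
    (fun _ _ h => add_le_add_left h a) hb

private lemma real_const_add_iInf {X : Type*} [Nonempty X] (f : X → ℝ) (a m : ℝ)
    (hm : ∀ x, m ≤ f x) : a + (⨅ x, f x) = ⨅ x, a + f x := by
  rw [add_comm, real_iInf_add f a m hm]
  simp only [add_comm]

private lemma real_iInf_pair_le {X Y : Type*} [Nonempty X] [Nonempty Y] (G : X → Y → ℝ)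
    (m : ℝ) (hm : ∀ x y, m ≤ G x y) (x : X) (y : Y) :
    (⨅ x', ⨅ y', G x' y') ≤ G x y := by
  have hb : BddBelow (Set.range (G x)) := ⟨m, by rintro _ ⟨y, rfl⟩; exact hm x y⟩
  have hb2 : BddBelow (Set.range fun x' => ⨅ y', G x' y') :=
    ⟨m, by rintro _ ⟨x', rfl⟩; exact le_ciInf (hm x')⟩
  exact (ciInf_le hb2 x).trans (ciInf_le hb y)

/-- Swapping two real infima when the function is uniformly bounded below. -/
private lemma real_iInf_comm {X Y : Type*} [Nonempty X] [Nonempty Y] (G : X → Y → ℝ) (m : ℝ)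
    (hm : ∀ x y, m ≤ G x y) : ⨅ x, ⨅ y, G x y = ⨅ y, ⨅ x, G x y := by
  apply le_antisymm
  · exact le_ciInf fun y => le_ciInf fun x => real_iInf_pair_le G m hm x y
  · exact le_ciInf fun x => le_ciInf fun y =>
      real_iInf_pair_le (fun y x => G x y) m (fun y x => hm x y) y x

set_option maxHeartbeats 1000000 in
/-- If `u_T` is reachable in time `T`, then it is reachable in any time
`T'` with `0 < T' ≤ T`: the set of reachable targets shrinks as the horizon grows. -/
theorem reachable_mono_in_time
    {n : ℕ} (hn : 0 < n) (T : ℝ) (hT : 0 < T)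
    (A : Matrix (Fin n) (Fin n) ℝ) (hA : A.PosDef)
    (uT : Euc n → ℝ) (huT : IsLip uT)
    (hreach : ∃ u0 : Euc n → ℝ, IsLip u0 ∧ SplusQ T A u0 = uT) :
    ∀ T' : ℝ, 0 < T' → T' ≤ T →
      ∃ u0' : Euc n → ℝ, IsLip u0' ∧ SplusQ T' A u0' = uT := by
  intro T' hT' hle
  obtain ⟨u0, ⟨K, hK⟩, hS⟩ := hreach
  rcases eq_or_lt_of_le hle with rfl | hlt
  · exact ⟨u0, ⟨K, hK⟩, hS⟩
  haveI : Nonempty (Fin n) := Fin.pos_iff_nonempty.mp hn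
  set s : ℝ := T - T' with hs_def
  have hs : 0 < s := by simp only [hs_def]; linarith
  have hsT : s + T' = T := by simp [hs_def]
  set M : Matrix (Fin n) (Fin n) ℝ := A⁻¹ with hM_def
  have hM : M.PosDef := hA.inv
  set L := Matrix.toEuclideanLin M with hL_def
  set q : Euc n → ℝ := quadA M with hq_def
  -- symmetry of the associated bilinear form
  have hsymm : ∀ u v : Euc n, ⟪L u, v⟫ = ⟪u, L v⟫ :=
    Matrix.isHermitian_iff_isSymmetric.mp hM.1
  have hvu : ∀ u v : Euc n, ⟪L v, u⟫ = ⟪L u, v⟫ := fun u v => by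
    rw [hsymm]; exact real_inner_comm _ _
  -- quadratic expansion
  have hq_expand : ∀ (a b : ℝ) (u v : Euc n),
      q (a • u + b • v) = a^2 * q u + 2*a*b*⟪L u, v⟫ + b^2 * q v := by
    intro a b u v
    simp only [hq_def, quadA, ← hL_def, map_add, map_smul, inner_add_left, inner_add_right,
      inner_smul_left, inner_smul_right, conj_trivial]
    rw [hvu u v]
    ring
  have hq_smul : ∀ (a : ℝ) (u : Euc n), q (a • u) = a^2 * q u := by
    intro a u
    have := hq_expand a 0 u 0
    simpa using this
  have hq_zero : q 0 = 0 := by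
    have := hq_smul 0 0
    simpa using this
  -- positivity
  have hq_pos : ∀ u : Euc n, u ≠ 0 → 0 < q u := by
    intro u hu
    have h := hM.dotProduct_mulVec_pos (x := (WithLp.equiv 2 (Fin n → ℝ)) u) (by
      intro h; apply hu
      have := congrArg (WithLp.equiv 2 (Fin n → ℝ)).symm h
      simpa using this)
    simp only [hq_def, quadA, ← hL_def]
    rw [EuclideanSpace.inner_eq_star_dotProduct]
    simpa [dotProduct_comm, hL_def] using h
  have hq_nonneg : ∀ u : Euc n, 0 ≤ q u := by
    intro u
    rcases eq_or_ne u 0 with rfl | hu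
    · simp [hq_zero]
    · exact (hq_pos u hu).le
  -- coercivity: q w ≥ c ‖w‖² for some c > 0
  have hqcont : Continuous q := by
    simp only [hq_def, quadA, ← hL_def]
    exact L.continuous_of_finiteDimensional.inner continuous_id
  obtain ⟨w0, hw0s, hmin⟩ := (isCompact_sphere (0 : Euc n) 1).exists_isMinOn
    (NormedSpace.sphere_nonempty.mpr zero_le_one) hqcont.continuousOn
  set c : ℝ := q w0 with hc_def
  have hw0ne : w0 ≠ 0 := by
    intro h
    rw [Metric.mem_sphere, dist_zero_right, h] at hw0s
    simp at hw0s
  have hc : 0 < c := hq_pos w0 hw0ne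
  have hcoer : ∀ w : Euc n, c * ‖w‖^2 ≤ q w := by
    intro w
    rcases eq_or_ne w 0 with rfl | hw
    · simp [hq_zero]
    · have hnw : (0:ℝ) < ‖w‖ := norm_pos_iff.mpr hw
      have hu : (‖w‖⁻¹ • w) ∈ Metric.sphere (0 : Euc n) 1 := by
        simp [norm_smul, abs_of_pos (inv_pos.mpr hnw), inv_mul_cancel₀ hnw.ne']
      have h1 : c ≤ q (‖w‖⁻¹ • w) := hmin hu
      have h2 : q (‖w‖⁻¹ • w) = (‖w‖⁻¹)^2 * q w := hq_smul _ _
      rw [h2] at h1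
      have h3 := mul_le_mul_of_nonneg_left h1 (sq_nonneg ‖w‖)
      calc c * ‖w‖^2 = ‖w‖^2 * c := by ring
        _ ≤ ‖w‖^2 * ((‖w‖⁻¹)^2 * q w) := h3
        _ = q w := by field_simp
  -- uniform lower bound for the Hopf-Lax integrand
  have hlb : ∀ (t : ℝ), 0 < t → ∀ x z : Euc n,
      u0 x - (K:ℝ)^2 * t / (2*c) ≤ u0 z + q (x - z) / (2*t) := by
    intro t ht x z
    have hdist : u0 x - u0 z ≤ (K:ℝ) * ‖x - z‖ := by
      have h := hK.dist_le_mul x z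
      rw [Real.dist_eq, dist_eq_norm] at h
      have := (abs_le.mp h).2
      linarith
    have hqw := hcoer (x - z)
    set r : ℝ := ‖x - z‖ with hr_def
    have hr : (0:ℝ) ≤ r := norm_nonneg _
    have hKnn : (0:ℝ) ≤ K := K.2
    have hA1 : c * r^2 / (2*t) ≤ q (x - z) / (2*t) := by gcongr
    have hA2 : (K:ℝ) * r ≤ (K:ℝ)^2 * t / (2*c) + c * r^2 / (2*t) := by
      rw [div_add_div _ _ (by positivity : (2*c:ℝ) ≠ 0) (by positivity : (2*t:ℝ) ≠ 0),
        le_div_iff₀ (by positivity)]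
      nlinarith [sq_nonneg (c*r - (K:ℝ)*t)]
    linarith
  have hbdd : ∀ (t : ℝ), 0 < t → ∀ x : Euc n,
      BddBelow (Set.range fun z : Euc n => u0 z + q (x - z) / (2*t)) := by
    intro t ht x
    exact ⟨u0 x - (K:ℝ)^2 * t / (2*c), by rintro _ ⟨z, rfl⟩; exact hlb t ht x z⟩
  -- the intermediate function
  set g : Euc n → ℝ := SplusQ s A u0 with hg_def
  have hg_eq : ∀ x : Euc n, g x = ⨅ z : Euc n, (u0 z + q (x - z) / (2*s)) := fun x => rfl
  -- g is Lipschitz with constant K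
  have main : ∀ a b : Euc n, g a ≤ g b + (K:ℝ) * dist a b := by
    intro a b
    rw [hg_eq a, hg_eq b, real_iInf_add _ ((K:ℝ) * dist a b) _ (hlb s hs b)]
    apply le_ciInf
    intro z
    have step : (⨅ z' : Euc n, (u0 z' + q (a - z') / (2*s)))
        ≤ u0 (z + a - b) + q (a - (z + a - b)) / (2*s) := ciInf_le (hbdd s hs a) _
    have hv : a - (z + a - b) = b - z := by abel
    rw [hv] at step
    have hlip : u0 (z + a - b) ≤ u0 z + (K:ℝ) * dist a b := by
      have h := hK.dist_le_mul (z + a - b) z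
      rw [Real.dist_eq] at h
      have h2 := (abs_le.mp h).2
      have h3 : dist (z + a - b) z = dist a b := by
        rw [dist_eq_norm, dist_eq_norm]
        congr 1
        abel
      rw [h3] at h2
      linarith
    linarith
  have hgK : LipschitzWith K g := by
    rw [lipschitzWith_iff_dist_le_mul]
    intro x x'
    rw [Real.dist_eq, abs_sub_le_iff]
    constructor
    · linarith [main x x']
    · have := main x' x
      rw [dist_comm] at this
      linarith
  refine ⟨g, ⟨K, hgK⟩, ?_⟩
  funext x
  have hTx : uT x = ⨅ z : Euc n, (u0 z + q (x - z) / (2*T)) := by rw [← hS]; rfl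
  -- the heart: the semigroup property
  have core : ∀ z : Euc n,
      (⨅ y : Euc n, (q (y - z) / (2*s) + q (x - y) / (2*T'))) = q (x - z) / (2*T) := by
    intro z
    have hbb : BddBelow (Set.range fun y : Euc n => q (y - z) / (2*s) + q (x - y) / (2*T')) := by
      refine ⟨0, ?_⟩
      rintro _ ⟨y, rfl⟩
      have := hq_nonneg (y - z)
      have := hq_nonneg (x - y)
      positivity
    apply le_antisymm
    · have hy0 : (⨅ y : Euc n, (q (y - z) / (2*s) + q (x - y) / (2*T')))
          ≤ q ((z + (s/T) • (x - z)) - z) / (2*s) + q (x - (z + (s/T) • (x - z))) / (2*T') :=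
        ciInf_le hbb _
      have h1 : (z + (s/T) • (x - z)) - z = (s/T) • (x - z) := by abel
      have h2 : x - (z + (s/T) • (x - z)) = (T'/T) • (x - z) := by
        have e : x - (z + (s/T) • (x - z)) = (1 - s/T) • (x - z) := by
          rw [sub_smul, one_smul, sub_add_eq_sub_sub]
        rw [e]
        congr 1
        field_simp [hs_def]
        linarith
      rw [h1, h2, hq_smul, hq_smul] at hy0
      refine hy0.trans (le_of_eq ?_)
      rw [hs_def] at *
      field_simp
      ring
    · apply le_ciInf
      intro y
      have huv : (y - z) + (x - y) = x - z := by abel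
      have e1 : q (x - z) = q (y - z) + 2*⟪L (y - z), (x - y)⟫ + q (x - y) := by
        rw [← huv]
        have := hq_expand 1 1 (y - z) (x - y)
        simpa using this
      have h3 : 0 ≤ q (T' • (y - z) + (-s) • (x - y)) := hq_nonneg _
      rw [hq_expand T' (-s) (y - z) (x - y)] at h3
      rw [e1, div_add_div _ _ (by positivity : (2*s:ℝ) ≠ 0) (by positivity : (2*T':ℝ) ≠ 0),
        div_le_div_iff₀ (by positivity) (by positivity), ← hsT]
      nlinarith [h3]
  -- assemble
  have step1 : ∀ y : Euc n, g y + q (x - y) / (2*T')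
      = ⨅ z : Euc n, (u0 z + q (y - z) / (2*s) + q (x - y) / (2*T')) := by
    intro y
    rw [hg_eq y]
    exact real_iInf_add _ _ _ (hlb s hs y)
  have hm : ∀ y z : Euc n,
      u0 x - (K:ℝ)^2 * T' / (2*c) - (K:ℝ)^2 * s / (2*c)
        ≤ u0 z + q (y - z) / (2*s) + q (x - y) / (2*T') := by
    intro y z
    have h1 := hlb s hs y z
    have h2 := hlb T' hT' x y
    linarith
  have step3 : ∀ z : Euc n,
      (⨅ y : Euc n, (u0 z + q (y - z) / (2*s) + q (x - y) / (2*T')))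
        = u0 z + q (x - z) / (2*T) := by
    intro z
    rw [← core z]
    simp only [add_assoc]
    refine (real_const_add_iInf _ _ 0 ?_).symm
    intro y
    have := hq_nonneg (y - z)
    have := hq_nonneg (x - y)
    positivity
  calc SplusQ T' A g x
      = ⨅ y : Euc n, (g y + q (x - y) / (2*T')) := rfl
    _ = ⨅ y : Euc n, ⨅ z : Euc n, (u0 z + q (y - z) / (2*s) + q (x - y) / (2*T')) :=
        iInf_congr step1
    _ = ⨅ z : Euc n, ⨅ y : Euc n, (u0 z + q (y - z) / (2*s) + q (x - y) / (2*T')) :=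
        real_iInf_comm _ _ (fun y z => hm y z)
    _ = ⨅ z : Euc n, (u0 z + q (x - z) / (2*T)) := iInf_congr step3
    _ = uT x := hTx.symm
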